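/- If M is a sublattice of an integral lattice L satisfying the SSD condition 2M* ⊆ M (where M* is the dual lattice of M inside the rational span of M), then M is RSSD in L, i.e., 2L ⊆ M + ann_L(M). -/

import Mathlib

open scoped RealInnerProductSpace

/-- **SSD implies RSSD.**
If `M` is a sublattice of an integral lattice `L` and `2M* ⊆ M`
(where `M*` is the dual lattice of `M` inside the rational/real span of `M`),
then `2L ⊆ M + ann_L(M)`. -/
theorem ssd_implies_rssd
    {V : Type*} [NormedAddCommGroup V] [InnerProductSpace ℝ V]
    [FiniteDimensional ℝ V]
    (L M : Submodule ℤ V) (hML : M ≤ L)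
    (hInt : ∀ x ∈ L, ∀ y ∈ L, ∃ n : ℤ, ⟪x, y⟫ = (n : ℝ))
    (hSSD : ∀ x ∈ Submodule.span ℝ (M : Set V),
        (∀ m ∈ M, ∃ n : ℤ, ⟪x, m⟫ = (n : ℝ)) → (2 : ℝ) • x ∈ M) :
    ∀ x ∈ L, ∃ m ∈ M, ∃ a ∈ L,
      (∀ y ∈ M, ⟪a, y⟫ = 0) ∧ (2 : ℤ) • x = m + a := by
  intro x hx
  set K : Submodule ℝ V := Submodule.span ℝ (M : Set V) with hK
  set p : V := (K.orthogonalProjection x : V) with hp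
  have hperp : x - p ∈ Kᗮ := K.sub_starProjection_mem_orthogonal x
  have hpm : ∀ y ∈ M, ⟪p, y⟫ = ⟪x, y⟫ := by
    intro y hy
    have h0 : ⟪x - p, y⟫ = 0 := by
      rw [real_inner_comm]; exact hperp y (Submodule.subset_span hy)
    rw [inner_sub_left] at h0
    linarith
  have h2p : (2 : ℝ) • p ∈ M := by
    refine hSSD p (K.orthogonalProjection x).2 ?_
    intro y hy
    rw [hpm y hy]
    exact hInt x hx y (hML hy)
  refine ⟨(2 : ℝ) • p, h2p, (2 : ℤ) • x - (2 : ℝ) • p, ?_, ?_, ?_⟩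
  · exact Submodule.sub_mem L (Submodule.smul_mem L 2 hx) (hML h2p)
  · intro y hy
    have h0 : ⟪x - p, y⟫ = 0 := by
      rw [real_inner_comm]; exact hperp y (Submodule.subset_span hy)
    have hxx : ((2:ℤ) • x - (2:ℝ) • p : V) = (x - p) + (x - p) := by
      rw [two_smul, two_smul]; abel
    rw [hxx, inner_add_left, h0, add_zero]
  · abel
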